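/- Fix n ≥ 1, τ_x > 0, τ_y > 0, and set γ = τ_x/(τ_x+τ_y). Let G be an n×n real matrix with nonnegative entries and zero diagonal, let r_1, …, r_n ∈ (0,1), set d_i^out = Σ_{j≠i} G i j, K_i = 1 − r_i + r_i·d_i^out, and let G̃ be the n×n matrix with entries G̃ i j = r_i·G i j / K_i. Let c = (I − γ·G̃)⁻¹ 𝟙, b_i = (1−γ)·c_i, and d_i^{in,r} = Σ_{j≠i} r_j·G j i. Let ε_1, …, ε_n, ε_0 be jointly independent square-integrable real random variables with mean zero, Var(ε_i) = 1/τ_x for 1 ≤ i ≤ n and Var(ε_0) = 1/τ_y, and define X_i = (1−b_i)·ε_i + b_i·ε_0. Define ΔW = Σ_{i=1}^{n} ( E[−(1−r_i)·X_i² − r_i·Σ_{j≠i} G i j·(X_i − X_j)²] + τ_x⁻¹(1 − r_i + 2·r_i·d_i^out) ). Then ΔW < 0 if and only if Σ_{i=1}^{n} c_i·( (K_i − d_i^{in,r})·c_i + 2·d_i^{in,r} ) < 0. -/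

import Mathlib

open Matrix Finset MeasureTheory ProbabilityTheory

private lemma int_sq_sum {Ω : Type*} [MeasurableSpace Ω] (μ : Measure Ω) [IsProbabilityMeasure μ]
    {ι : Type*} (ε : ι → Ω → ℝ)
    (hindep : iIndepFun ε μ)
    (hL2 : ∀ k, MemLp (ε k) 2 μ) (hmean : ∀ k, ∫ ω, ε k ω ∂μ = 0)
    (s : Finset ι) (a : ι → ℝ) :
    ∫ ω, (∑ k ∈ s, a k * ε k ω) ^ 2 ∂μ = ∑ k ∈ s, (a k) ^ 2 * variance (ε k) μ := by
  classical
  have hmul : ∀ k l : ι, Integrable (fun ω => ε k ω * ε l ω) μ := by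
    intro k l
    haveI : ENNReal.HolderTriple 2 2 1 := ⟨by rw [ENNReal.inv_two_add_inv_two, inv_one]⟩
    have h := ((hL2 l).smul (hL2 k) (p := 2) (q := 2) (r := 1))
    have h' : MemLp (fun ω => ε k ω * ε l ω) 1 μ := by
      exact h
    exact (memLp_one_iff_integrable.mp h')
  have hv : ∀ k, ∫ ω, ε k ω * ε k ω ∂μ = variance (ε k) μ := by
    intro k
    rw [variance_eq_sub (hL2 k), hmean k]
    simp [pow_two]
  calc ∫ ω, (∑ k ∈ s, a k * ε k ω) ^ 2 ∂μ
      = ∫ ω, ∑ k ∈ s, ∑ l ∈ s, (a k * a l) * (ε k ω * ε l ω) ∂μ := by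
        refine integral_congr_ae (Filter.Eventually.of_forall fun ω => ?_)
        show (∑ k ∈ s, a k * ε k ω) ^ 2 = ∑ k ∈ s, ∑ l ∈ s, (a k * a l) * (ε k ω * ε l ω)
        rw [sq, Finset.sum_mul_sum]
        exact Finset.sum_congr rfl fun k _ => Finset.sum_congr rfl fun l _ => by ring
    _ = ∑ k ∈ s, ∑ l ∈ s, (a k * a l) * ∫ ω, ε k ω * ε l ω ∂μ := by
        rw [integral_finset_sum _ (fun k _ =>
          integrable_finset_sum _ (fun l _ => (hmul k l).const_mul _))]
        refine Finset.sum_congr rfl fun k _ => ?_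
        rw [integral_finset_sum _ (fun l _ => (hmul k l).const_mul _)]
        exact Finset.sum_congr rfl fun l _ => integral_const_mul _ _
    _ = ∑ k ∈ s, (a k) ^ 2 * variance (ε k) μ := by
        refine Finset.sum_congr rfl fun k hk => ?_
        rw [Finset.sum_eq_single_of_mem k hk]
        · rw [hv k]; ring
        · intro l hl hne
          have h0 : ∫ ω, ε k ω * ε l ω ∂μ = 0 := by
            rw [(hindep.indepFun (Ne.symm hne)).integral_fun_mul_eq_mul_integral (hL2 k).aestronglyMeasurable
              (hL2 l).aestronglyMeasurable, hmean k, hmean l, mul_zero]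
          rw [h0, mul_zero]

private lemma int_sq_two {Ω : Type*} [MeasurableSpace Ω] (μ : Measure Ω) [IsProbabilityMeasure μ]
    {ι : Type*} [DecidableEq ι] (ε : ι → Ω → ℝ)
    (hindep : iIndepFun ε μ)
    (hL2 : ∀ k, MemLp (ε k) 2 μ) (hmean : ∀ k, ∫ ω, ε k ω ∂μ = 0)
    (k l : ι) (hkl : k ≠ l) (ak al : ℝ) :
    ∫ ω, (ak * ε k ω + al * ε l ω) ^ 2 ∂μ
      = ak ^ 2 * variance (ε k) μ + al ^ 2 * variance (ε l) μ := by
  calc ∫ ω, (ak * ε k ω + al * ε l ω) ^ 2 ∂μ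
      = ∫ ω, (∑ m ∈ ({k, l} : Finset ι), (if m = k then ak else al) * ε m ω) ^ 2 ∂μ := by
        refine integral_congr_ae (Filter.Eventually.of_forall fun ω => ?_)
        simp only [Finset.sum_pair hkl]
        simp [Ne.symm hkl]
    _ = ∑ m ∈ ({k, l} : Finset ι), (if m = k then ak else al) ^ 2 * variance (ε m) μ :=
        int_sq_sum μ ε hindep hL2 hmean _ _
    _ = ak ^ 2 * variance (ε k) μ + al ^ 2 * variance (ε l) μ := by
        rw [Finset.sum_pair hkl]
        simp [Ne.symm hkl]
        try ring

private lemma int_sq_three {Ω : Type*} [MeasurableSpace Ω] (μ : Measure Ω) [IsProbabilityMeasure μ]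
    {ι : Type*} [DecidableEq ι] (ε : ι → Ω → ℝ)
    (hindep : iIndepFun ε μ)
    (hL2 : ∀ k, MemLp (ε k) 2 μ) (hmean : ∀ k, ∫ ω, ε k ω ∂μ = 0)
    (k l m : ι) (hkl : k ≠ l) (hkm : k ≠ m) (hlm : l ≠ m) (ak al am : ℝ) :
    ∫ ω, (ak * ε k ω + al * ε l ω + am * ε m ω) ^ 2 ∂μ
      = ak ^ 2 * variance (ε k) μ + al ^ 2 * variance (ε l) μ
        + am ^ 2 * variance (ε m) μ := by
  have hk : k ∉ ({l, m} : Finset ι) := by simp [hkl, hkm]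
  calc ∫ ω, (ak * ε k ω + al * ε l ω + am * ε m ω) ^ 2 ∂μ
      = ∫ ω, (∑ x ∈ insert k ({l, m} : Finset ι),
          (if x = k then ak else if x = l then al else am) * ε x ω) ^ 2 ∂μ := by
        refine integral_congr_ae (Filter.Eventually.of_forall fun ω => ?_)
        simp only [Finset.sum_insert hk, Finset.sum_pair hlm]
        simp [Ne.symm hkl, Ne.symm hkm, Ne.symm hlm]
        try ring
    _ = ∑ x ∈ insert k ({l, m} : Finset ι),
          (if x = k then ak else if x = l then al else am) ^ 2 * variance (ε x) μ :=
        int_sq_sum μ ε hindep hL2 hmean _ _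
    _ = ak ^ 2 * variance (ε k) μ + al ^ 2 * variance (ε l) μ + am ^ 2 * variance (ε m) μ := by
        rw [Finset.sum_insert hk, Finset.sum_pair hlm]
        simp [Ne.symm hkl, Ne.symm hkm, Ne.symm hlm]
        try ring

/-- In the generalized beauty contest with coordination intensities
`r_i`, normalized network `G̃ i j = r_i G i j / K_i` with `K_i = 1 - r_i + r_i d_i^out`,
the welfare effect of public information is negative (`ΔW < 0`) if and only if
`Σ_i c_i ((K_i - d_i^{in,r}) c_i + 2 d_i^{in,r}) < 0`. -/
theorem stmt19 (n : ℕ) (hn : 1 ≤ n) (τx τy : ℝ) (hτx : 0 < τx) (hτy : 0 < τy)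
    (γ : ℝ) (hγ : γ = τx / (τx + τy))
    (G : Matrix (Fin n) (Fin n) ℝ)
    (hposG : ∀ i j, 0 ≤ G i j) (hdiag : ∀ i, G i i = 0)
    (r : Fin n → ℝ) (hr : ∀ i, r i ∈ Set.Ioo (0 : ℝ) 1)
    (dout : Fin n → ℝ) (hdout : ∀ i, dout i = ∑ j ∈ Finset.univ.erase i, G i j)
    (K : Fin n → ℝ) (hK : ∀ i, K i = 1 - r i + r i * dout i)
    (Gt : Matrix (Fin n) (Fin n) ℝ) (hGt : ∀ i j, Gt i j = r i * G i j / K i)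
    (c : Fin n → ℝ) (hc : c = (1 - γ • Gt)⁻¹ *ᵥ fun _ => 1)
    (b : Fin n → ℝ) (hb : ∀ i, b i = (1 - γ) * c i)
    (dinr : Fin n → ℝ) (hdinr : ∀ i, dinr i = ∑ j ∈ Finset.univ.erase i, r j * G j i)
    {Ω : Type*} [MeasurableSpace Ω] (μ : Measure Ω) [IsProbabilityMeasure μ]
    (ε : Option (Fin n) → Ω → ℝ)
    (hindep : iIndepFun ε μ)
    (hL2 : ∀ k, MemLp (ε k) 2 μ)
    (hmean : ∀ k, ∫ ω, ε k ω ∂μ = 0)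
    (hvarx : ∀ i : Fin n, variance (ε (some i)) μ = 1 / τx)
    (hvary : variance (ε none) μ = 1 / τy)
    (X : Fin n → Ω → ℝ)
    (hX : ∀ i ω, X i ω = (1 - b i) * ε (some i) ω + b i * ε none ω)
    (ΔW : ℝ)
    (hΔW : ΔW = ∑ i, ((∫ ω, (-(1 - r i) * (X i ω) ^ 2
          - r i * ∑ j ∈ Finset.univ.erase i, G i j * (X i ω - X j ω) ^ 2) ∂μ)
        + τx⁻¹ * (1 - r i + 2 * r i * dout i))) :
    ΔW < 0 ↔ ∑ i, c i * ((K i - dinr i) * c i + 2 * dinr i) < 0 := by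
  classical
  have hτxy : (0:ℝ) < τx + τy := by linarith
  have hγpos : 0 < γ := by rw [hγ]; positivity
  have hγlt : γ < 1 := by rw [hγ, div_lt_one hτxy]; linarith
  -- positivity of K
  have hdoutnn : ∀ i, 0 ≤ dout i := fun i => by
    rw [hdout i]; exact Finset.sum_nonneg fun j _ => hposG i j
  have hKpos : ∀ i, 0 < K i := fun i => by
    have h1 := (hr i).1; have h2 := (hr i).2
    have := mul_nonneg (le_of_lt h1) (hdoutnn i)
    rw [hK i]; linarith
  -- second moments
  have hA : ∀ i, ∫ ω, (X i ω) ^ 2 ∂μ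
      = (1 - b i) ^ 2 * (1/τx) + (b i) ^ 2 * (1/τy) := by
    intro i
    have h := int_sq_two μ ε hindep hL2 hmean (some i) none (by simp) (1 - b i) (b i)
    rw [hvarx i, hvary] at h
    rw [← h]
    exact integral_congr_ae (Filter.Eventually.of_forall fun ω => by simp only [hX])
  have hD : ∀ i j : Fin n, i ≠ j → ∫ ω, (X i ω - X j ω) ^ 2 ∂μ
      = (1 - b i) ^ 2 * (1/τx) + (1 - b j) ^ 2 * (1/τx) + (b i - b j) ^ 2 * (1/τy) := by
    intro i j hij
    have h := int_sq_three μ ε hindep hL2 hmean (some i) (some j) none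
      (by simpa using hij) (by simp) (by simp) (1 - b i) (-(1 - b j)) (b i - b j)
    rw [hvarx i, hvarx j, hvary] at h
    have e : ∫ ω, (X i ω - X j ω) ^ 2 ∂μ
        = ∫ ω, ((1 - b i) * ε (some i) ω + (-(1 - b j)) * ε (some j) ω
            + (b i - b j) * ε none ω) ^ 2 ∂μ :=
      integral_congr_ae (Filter.Eventually.of_forall fun ω => by simp only [hX]; ring)
    rw [e, h]; ring
  -- integrability and splitting of the welfare integral
  have hXL2 : ∀ i, MemLp (X i) 2 μ := by
    intro i
    have : X i = fun ω => (1 - b i) * ε (some i) ω + b i * ε none ω := funext (hX i)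
    rw [this]
    exact ((hL2 (some i)).const_mul _).add ((hL2 none).const_mul _)
  have sqX : ∀ i, Integrable (fun ω => (X i ω) ^ 2) μ := fun i => (hXL2 i).integrable_sq
  have sqD : ∀ i j : Fin n, Integrable (fun ω => (X i ω - X j ω) ^ 2) μ := by
    intro i j
    have h := ((hXL2 i).sub (hXL2 j)).integrable_sq
    simpa [Pi.sub_apply] using h
  have hint : ∀ i, (∫ ω, (-(1 - r i) * (X i ω) ^ 2
        - r i * ∑ j ∈ Finset.univ.erase i, G i j * (X i ω - X j ω) ^ 2) ∂μ)
      = -(1 - r i) * (∫ ω, (X i ω) ^ 2 ∂μ)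
        - r i * ∑ j ∈ Finset.univ.erase i, G i j * ∫ ω, (X i ω - X j ω) ^ 2 ∂μ := by
    intro i
    rw [integral_sub ((sqX i).const_mul _)
      (Integrable.const_mul (integrable_finset_sum _ fun j _ => (sqD i j).const_mul _) _),
      integral_const_mul, integral_const_mul,
      integral_finset_sum _ (fun j _ => (sqD i j).const_mul _)]
    simp_rw [integral_const_mul]
  -- abbreviation for second moment
  set U : Fin n → ℝ := fun i => (1 - b i) ^ 2 * (1/τx) + (b i) ^ 2 * (1/τy) with hU
  have hΔW2 : ΔW = ∑ i, (-(1 - r i) * U i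
      - r i * ∑ j ∈ Finset.univ.erase i, G i j *
          ((1 - b i) ^ 2 * (1/τx) + (1 - b j) ^ 2 * (1/τx) + (b i - b j) ^ 2 * (1/τy))
      + τx⁻¹ * (1 - r i + 2 * r i * dout i)) := by
    rw [hΔW]
    refine Finset.sum_congr rfl fun i _ => ?_
    rw [hint i, hA i]
    have e : ∑ j ∈ Finset.univ.erase i, G i j * ∫ ω, (X i ω - X j ω) ^ 2 ∂μ
        = ∑ j ∈ Finset.univ.erase i, G i j *
            ((1 - b i) ^ 2 * (1/τx) + (1 - b j) ^ 2 * (1/τx) + (b i - b j) ^ 2 * (1/τy)) :=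
      Finset.sum_congr rfl fun j hj => by rw [hD i j (Ne.symm (Finset.mem_erase.mp hj).1)]
    rw [e]
  -- turn erased sums into full sums and expand
  have hfull : ∀ (i : Fin n) (f : Fin n → ℝ),
      ∑ j ∈ Finset.univ.erase i, G i j * f j = ∑ j, G i j * f j := by
    intro i f
    exact Finset.sum_erase _ (by rw [hdiag i, zero_mul])
  have hΔW3 : ΔW = ∑ i, (-(1 - r i) * U i
      - r i * (dout i * U i + (∑ j, G i j * U j) - 2 * b i * (1/τy) * (∑ j, G i j * b j))
      + τx⁻¹ * (1 - r i + 2 * r i * dout i)) := by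
    rw [hΔW2]
    refine Finset.sum_congr rfl fun i _ => ?_
    have e1 : ∑ j ∈ Finset.univ.erase i, G i j *
          ((1 - b i) ^ 2 * (1/τx) + (1 - b j) ^ 2 * (1/τx) + (b i - b j) ^ 2 * (1/τy))
        = dout i * U i + (∑ j ∈ Finset.univ.erase i, G i j * U j)
          - 2 * b i * (1/τy) * (∑ j ∈ Finset.univ.erase i, G i j * b j) := by
      rw [hdout i, Finset.sum_mul, Finset.mul_sum, ← Finset.sum_add_distrib,
        ← Finset.sum_sub_distrib]
      exact Finset.sum_congr rfl fun j _ => by simp only [hU]; ring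
    rw [e1, hfull i U, hfull i b]
  -- swap of double sums
  have hdinrfull : ∀ j, dinr j = ∑ i, r i * G i j := by
    intro j
    rw [hdinr j]
    exact Finset.sum_erase _ (by rw [hdiag j, mul_zero])
  have hsum1 : ∑ i, r i * ∑ j, G i j * U j = ∑ i, dinr i * U i := by
    simp_rw [Finset.mul_sum]
    rw [Finset.sum_comm]
    refine Finset.sum_congr rfl fun j _ => ?_
    rw [hdinrfull j, Finset.sum_mul]
    exact Finset.sum_congr rfl fun i _ => by ring
  have hsum0 : ∑ i, r i * dout i = ∑ i, dinr i := by
    have h1 : ∀ i, r i * dout i = ∑ j, r i * G i j := by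
      intro i
      rw [hdout i, Finset.mul_sum, Finset.sum_erase _ (by rw [hdiag i, mul_zero])]
    simp_rw [h1]
    rw [Finset.sum_comm]
    exact Finset.sum_congr rfl fun j _ => (hdinrfull j).symm
  have hΔW4 : ΔW = ∑ i, ((-(1 - r i) * U i - r i * dout i * U i
      + 2 * r i * b i * (1/τy) * (∑ j, G i j * b j)
      + τx⁻¹ * (1 - r i + 2 * r i * dout i)) - dinr i * U i) := by
    have e : ∀ i, (-(1 - r i) * U i
        - r i * (dout i * U i + (∑ j, G i j * U j) - 2 * b i * (1/τy) * (∑ j, G i j * b j))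
        + τx⁻¹ * (1 - r i + 2 * r i * dout i))
        = ((-(1 - r i) * U i - r i * dout i * U i
          + 2 * r i * b i * (1/τy) * (∑ j, G i j * b j)
          + τx⁻¹ * (1 - r i + 2 * r i * dout i)) - r i * ∑ j, G i j * U j) := fun i => by ring
    rw [hΔW3]
    simp_rw [e]
    rw [Finset.sum_sub_distrib, hsum1, ← Finset.sum_sub_distrib]
  have hper : ∀ i, ((-(1 - r i) * U i - r i * dout i * U i
      + 2 * r i * b i * (1/τy) * (∑ j, G i j * b j)
      + τx⁻¹ * (1 - r i + 2 * r i * dout i)) - dinr i * U i)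
      = (r i * dout i - dinr i) * τx⁻¹
        + ((1 - γ)/τx) * (c i * ((K i - dinr i) * c i + 2 * dinr i)) := by
    have hBc : ∀ i, ∑ j, G i j * b j = (1 - γ) * ∑ j, G i j * c j := by
      intro i; rw [Finset.mul_sum]; exact Finset.sum_congr rfl fun j _ => by rw [hb j]; ring
    by_cases hinv : IsUnit (1 - γ • Gt).det
    · have hAc : (1 - γ • Gt) *ᵥ c = (fun _ => (1:ℝ)) := by
        rw [hc, Matrix.mulVec_mulVec, Matrix.mul_nonsing_inv _ hinv, Matrix.one_mulVec]
      intro i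
      have h1 : ∑ j, ((1 : Matrix (Fin n) (Fin n) ℝ) i j - γ * Gt i j) * c j = 1 := by
        have h := congrFun hAc i
        simpa [Matrix.mulVec, dotProduct, Matrix.sub_apply, Matrix.smul_apply,
          smul_eq_mul] using h
      have h2 : ∑ j, (1 : Matrix (Fin n) (Fin n) ℝ) i j * c j = c i := by
        simp [Matrix.one_apply]
      simp_rw [sub_mul] at h1
      rw [Finset.sum_sub_distrib, h2] at h1
      have h3 : ∑ j, γ * Gt i j * c j = γ * (r i / K i) * ∑ j, G i j * c j := by
        rw [Finset.mul_sum]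
        exact Finset.sum_congr rfl fun j _ => by rw [hGt i j]; ring
      rw [h3] at h1
      have hKne : K i ≠ 0 := ne_of_gt (hKpos i)
      have hrne : r i ≠ 0 := ne_of_gt (hr i).1
      have hγne : γ ≠ 0 := ne_of_gt hγpos
      have hτxne : τx ≠ 0 := ne_of_gt hτx
      have hτyne : τy ≠ 0 := ne_of_gt hτy
      have hτxyne : τx + τy ≠ 0 := ne_of_gt hτxy
      have hCval : ∑ j, G i j * c j = K i * (c i - 1) / (γ * r i) := by
        rw [eq_div_iff (mul_ne_zero hγne hrne)]
        have h4 : K i * (c i - γ * (r i / K i) * ∑ j, G i j * c j) = K i * 1 := by rw [h1]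
        field_simp at h4
        linarith [h4]
      rw [hBc i, hCval, hK i]
      simp only [hU, hb, hγ]
      field_simp
      ring
    · intro i
      have hC0 : (1 - γ • Gt)⁻¹ = 0 := Matrix.nonsing_inv_apply_not_isUnit _ hinv
      have hc0 : ∀ j, c j = 0 := fun j => by rw [hc, hC0, Matrix.zero_mulVec]; rfl
      have hb0 : ∀ j, b j = 0 := fun j => by rw [hb j, hc0 j, mul_zero]
      simp only [hU, hb0, hc0]
      ring
  have hΔW5 : ΔW = ((1 - γ)/τx) * ∑ i, c i * ((K i - dinr i) * c i + 2 * dinr i) := by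
    rw [hΔW4]
    rw [Finset.sum_congr rfl fun i _ => hper i]
    rw [Finset.sum_add_distrib, ← Finset.sum_mul, ← Finset.mul_sum]
    have h0 : ∑ i, (r i * dout i - dinr i) = 0 := by
      rw [Finset.sum_sub_distrib, hsum0, sub_self]
    rw [h0, zero_mul, zero_add]
  rw [hΔW5]
  have hpos : 0 < (1 - γ)/τx := div_pos (by linarith) hτx
  constructor
  · intro h
    by_contra hS
    push_neg at hS
    exact absurd h (not_lt.mpr (mul_nonneg hpos.le hS))
  · exact fun h => mul_neg_of_pos_of_neg hpos h
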